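/- Let V be a finite type and let x : V → V → ℤ satisfy x i j ∈ {0, 1} for all i ≠ j. The following are equivalent: (a) for all i ≠ j, x i j + x j i = 1 (consistency), and for all pairwise distinct i, j, k, 0 ≤ x i j + x j k − x i k and x i j + x j k − x i k ≤ 1 (transitivity); (b) there exists a strict total order ≺ on V such that for all i ≠ j, x i j = 1 if and only if i ≺ j. -/

import Mathlib

/-- The consistency constraints `x i j + x j i = 1` together with the linear transitivity
constraints `0 ≤ x i j + x j k - x i k ≤ 1` characterize exactly those 0/1-assignments
that arise from a strict total order on the vertices via `x i j = 1 ↔ i ≺ j`. -/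
theorem ordering_constraints_iff_strictTotalOrder {V : Type*} [Fintype V]
    (x : V → V → ℤ) (h01 : ∀ i j, i ≠ j → x i j = 0 ∨ x i j = 1) :
    ((∀ i j, i ≠ j → x i j + x j i = 1) ∧
      (∀ i j k, i ≠ j → j ≠ k → i ≠ k →
        0 ≤ x i j + x j k - x i k ∧ x i j + x j k - x i k ≤ 1)) ↔
    (∃ r : V → V → Prop, IsStrictTotalOrder V r ∧
      ∀ i j, i ≠ j → (x i j = 1 ↔ r i j)) := by
  constructor
  · rintro ⟨hcon, htr⟩
    refine ⟨fun i j => i ≠ j ∧ x i j = 1, ?_, fun i j hij => ⟨fun h => ⟨hij, h⟩, fun h => h.2⟩⟩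
    refine { trichotomous := ?_, irrefl := fun a h => h.1 rfl, trans := ?_ }
    · intro a b
      by_cases hab : a = b
      · simp [hab]
      · rcases h01 a b hab with h | h
        · intro _ h2; refine absurd ?_ h2
          have := hcon a b hab
          exact ⟨Ne.symm hab, by omega⟩
        · intro h1 _; exact absurd ⟨hab, h⟩ h1
    · rintro a b c ⟨hab, hxab⟩ ⟨hbc, hxbc⟩
      have hac : a ≠ c := by
        rintro rfl
        have := hcon a b hab
        omega
      have h1 := htr a b c hab hbc hac
      rcases h01 a c hac with h | h
      · omega
      · exact ⟨hac, h⟩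
  · rintro ⟨r, hr, hx⟩
    have tri := hr.trichotomous
    have irr := hr.irrefl
    have tr := hr.trans
    have key : ∀ i j, i ≠ j → (x i j = 1 ∧ r i j) ∨ (x i j = 0 ∧ r j i) := by
      intro i j hij
      rcases (show r i j ∨ i = j ∨ r j i by have := tri i j; tauto) with h | h | h
      · exact Or.inl ⟨(hx i j hij).2 h, h⟩
      · exact absurd h hij
      · right
        refine ⟨?_, h⟩
        rcases h01 i j hij with h0 | h0
        · exact h0
        · exact absurd (tr _ _ _ ((hx i j hij).1 h0) h) (irr i)
    constructor
    · intro i j hij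
      rcases key i j hij with ⟨h1, h2⟩ | ⟨h1, h2⟩ <;>
        rcases key j i hij.symm with ⟨h1', h2'⟩ | ⟨h1', h2'⟩ <;>
        first
          | omega
          | exact (irr i (tr i j i h2 h2')).elim
          | exact (irr j (tr j i j h2 h2')).elim
    · intro i j k hij hjk hik
      rcases key i j hij with ⟨h1, h2⟩ | ⟨h1, h2⟩ <;>
        rcases key j k hjk with ⟨h1', h2'⟩ | ⟨h1', h2'⟩ <;>
        rcases key i k hik with ⟨h1'', h2''⟩ | ⟨h1'', h2''⟩ <;>
        first
          | omega
          | exact (irr i (tr i k i (tr i j k h2 h2') h2'')).elim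
          | exact (irr k (tr k i k (tr k j i h2' h2) h2'')).elim
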